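/- Let (Y, ω) be a symplectic vector space (ω antisymmetric, nondegenerate, continuous bilinear) and f a symplectic vector field, i.e., ω(f'(y)ξ, η) + ω(ξ, f'(y)η) = 0 for all y, ξ, η. If Φ is an affine equivariant numerical integrator preserving quadratic invariants, then Φ_f is a symplectic map: ω(Φ_f'(y₀)ξ₀, Φ_f'(y₀)η₀) = ω(ξ₀, η₀) for all y₀, ξ₀, η₀. -/

import Mathlib

open Filter Asymptotics Topology


/-- A one-step numerical integrator: assigns to every vector field `f` on a
Banach space `Y` a map `Φ_f : Y → Y` (unit time step). -/
structure Integrator : Type 1 where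
  map : ∀ (Y : Type) [NormedAddCommGroup Y] [NormedSpace ℝ Y], (Y → Y) → Y → Y

/-- `Φ` is affine equivariant: whenever the affine map `y ↦ A y + c` intertwines
the vector fields `f` and `g` (i.e. `A (f y) = g (A y + c)` for all `y`),
it intertwines `Φ_f` and `Φ_g`. -/
def AffineEquivariant (Φ : Integrator) : Prop :=
  ∀ (Y U : Type) [NormedAddCommGroup Y] [NormedSpace ℝ Y]
    [NormedAddCommGroup U] [NormedSpace ℝ U],
    ∀ (A : Y →L[ℝ] U) (c : U) (f : Y → Y) (g : U → U),
      (∀ y, A (f y) = g (A y + c)) →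
      ∀ y₀, A (Φ.map Y f y₀) + c = Φ.map U g (A y₀ + c)

/-- `Φ` preserves quadratic invariants: for every quadratic functional
`Q(y) = B(y,y) + L(y) + c` (with `B` continuous bilinear and `L` continuous
linear) that is an invariant of `f`, i.e. `B(f y, y) + B(y, f y) + L(f y) = 0`
for all `y`, the value of `Q` is preserved by `Φ_f`. -/
def PreservesQuadraticInvariants (Φ : Integrator) : Prop :=
  ∀ (Y : Type) [NormedAddCommGroup Y] [NormedSpace ℝ Y],
    ∀ (B : Y →L[ℝ] Y →L[ℝ] ℝ) (L : Y →L[ℝ] ℝ) (c : ℝ) (f : Y → Y),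
      (∀ y, B (f y) y + B y (f y) + L (f y) = 0) →
      ∀ y₀, B (Φ.map Y f y₀) (Φ.map Y f y₀) + L (Φ.map Y f y₀) + c
            = B y₀ y₀ + L y₀ + c

theorem integrator_prod {Y : Type} [NormedAddCommGroup Y] [NormedSpace ℝ Y]
    (Φ : Integrator) (hae : AffineEquivariant Φ) (f : Y → Y) (p₀ : Y × Y) :
    Φ.map (Y × Y) (fun p => (f p.1, f p.2)) p₀ = (Φ.map Y f p₀.1, Φ.map Y f p₀.2) := by
  have h1 := hae (Y × Y) Y (ContinuousLinearMap.fst ℝ Y Y) 0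
      (fun p => (f p.1, f p.2)) f (fun p => by simp) p₀
  have h2 := hae (Y × Y) Y (ContinuousLinearMap.snd ℝ Y Y) 0
      (fun p => (f p.1, f p.2)) f (fun p => by simp) p₀
  simp only [ContinuousLinearMap.coe_fst', ContinuousLinearMap.coe_snd', add_zero] at h1 h2
  exact Prod.ext h1 h2

theorem integrator_quot {Y : Type} [NormedAddCommGroup Y] [NormedSpace ℝ Y]
    (Φ : Integrator) (hae : AffineEquivariant Φ) (f : Y → Y)
    (c : ℝ) (hc : c ≠ 0) (y ζ : Y) :
    Φ.map (Y × Y) (fun p => (f p.1, c • (f (p.1 + c⁻¹ • p.2) - f p.1))) (y, ζ)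
      = (Φ.map Y f y, c • (Φ.map Y f (y + c⁻¹ • ζ) - Φ.map Y f y)) := by
  set A : (Y × Y) →L[ℝ] (Y × Y) :=
    (ContinuousLinearMap.fst ℝ Y Y).prod
      ((ContinuousLinearMap.fst ℝ Y Y) + c⁻¹ • (ContinuousLinearMap.snd ℝ Y Y)) with hA
  have hAapp : ∀ p : Y × Y, A p = (p.1, p.1 + c⁻¹ • p.2) := by
    intro p
    simp [hA]
  have hcond : ∀ p : Y × Y,
      A ((fun p : Y × Y => (f p.1, c • (f (p.1 + c⁻¹ • p.2) - f p.1))) p)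
        = (fun p : Y × Y => (f p.1, f p.2)) (A p + 0) := by
    intro p
    rw [add_zero, hAapp, hAapp]
    dsimp only
    rw [inv_smul_smul₀ hc]
    simp
  have h := hae (Y × Y) (Y × Y) A 0 (fun p : Y × Y => (f p.1, c • (f (p.1 + c⁻¹ • p.2) - f p.1)))
      (fun p : Y × Y => (f p.1, f p.2)) hcond (y, ζ)
  rw [add_zero, add_zero, integrator_prod Φ hae f, hAapp, hAapp] at h
  dsimp only at h
  have h1 : (Φ.map (Y × Y) (fun p => (f p.1, c • (f (p.1 + c⁻¹ • p.2) - f p.1))) (y, ζ)).1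
      = Φ.map Y f y := congrArg Prod.fst h
  have h2 : (Φ.map (Y × Y) (fun p => (f p.1, c • (f (p.1 + c⁻¹ • p.2) - f p.1))) (y, ζ)).1
      + c⁻¹ • (Φ.map (Y × Y) (fun p => (f p.1, c • (f (p.1 + c⁻¹ • p.2) - f p.1))) (y, ζ)).2
      = Φ.map Y f (y + c⁻¹ • ζ) := congrArg Prod.snd h
  refine Prod.ext h1 ?_
  rw [h1] at h2
  have h3 : c⁻¹ • (Φ.map (Y × Y) (fun p => (f p.1, c • (f (p.1 + c⁻¹ • p.2) - f p.1))) (y, ζ)).2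
      = Φ.map Y f (y + c⁻¹ • ζ) - Φ.map Y f y := by
    rw [← h2]; abel
  calc (Φ.map (Y × Y) (fun p => (f p.1, c • (f (p.1 + c⁻¹ • p.2) - f p.1))) (y, ζ)).2
      = c • (c⁻¹ • (Φ.map (Y × Y) (fun p => (f p.1, c • (f (p.1 + c⁻¹ • p.2) - f p.1))) (y, ζ)).2) := by
        rw [smul_inv_smul₀ hc]
    _ = c • (Φ.map Y f (y + c⁻¹ • ζ) - Φ.map Y f y) := by rw [h3]

theorem integrator_variational {Y : Type} [NormedAddCommGroup Y] [NormedSpace ℝ Y]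
    (Φ : Integrator) (hae : AffineEquivariant Φ)
    (f : Y → Y) (hf : Differentiable ℝ f) (hΦdiff : Differentiable ℝ (Φ.map Y f))
    (y₀ ξ₀ : Y) :
    Φ.map (Y × Y) (fun p => (f p.1, fderiv ℝ f p.1 p.2)) (y₀, ξ₀)
      = (Φ.map Y f y₀, fderiv ℝ (Φ.map Y f) y₀ ξ₀) := by
  have hcne : ∀ n : ℕ, ((n : ℝ) + 1) ≠ 0 := fun n => by positivity
  have hcinv : Tendsto (fun n : ℕ => ((n : ℝ) + 1)⁻¹) atTop (𝓝 0) := by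
    have h1 : Tendsto (fun n : ℕ => ((n : ℝ) + 1)) atTop atTop :=
      tendsto_atTop_add_const_right _ 1 tendsto_natCast_atTop_atTop
    exact h1.inv_tendsto_atTop
  -- the analytic key
  have key : ∀ (y ξ : Y) (a : ZeroAtInftyContinuousMap ℕ Y),
      Tendsto (fun n : ℕ =>
        ((n : ℝ) + 1) • (f (y + ((n : ℝ) + 1)⁻¹ • (ξ + a n)) - f y) - fderiv ℝ f y ξ)
        atTop (𝓝 0) := by
    intro y ξ a
    have ha : Tendsto (fun n : ℕ => a n) atTop (𝓝 0) := by
      have h := zero_at_infty (f := a)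
      rwa [cocompact_eq_atTop (α := ℕ)] at h
    have hv : Tendsto (fun n : ℕ => ξ + a n) atTop (𝓝 ξ) := by
      simpa using tendsto_const_nhds.add ha
    have hh : Tendsto (fun n : ℕ => ((n : ℝ) + 1)⁻¹ • (ξ + a n)) atTop (𝓝 0) := by
      simpa using hcinv.smul hv
    have hder := hasFDerivAt_iff_isLittleO_nhds_zero.1 (hf y).hasFDerivAt
    have L2 := hder.comp_tendsto hh
    simp only [Function.comp_def] at L2
    have L3 := (isBigO_refl (fun n : ℕ => ((n : ℝ) + 1)) atTop).smul_isLittleO L2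
    have hL4 : (fun n : ℕ => ((n : ℝ) + 1) • (((n : ℝ) + 1)⁻¹ • (ξ + a n)))
        = fun n : ℕ => ξ + a n := by
      funext n; rw [smul_inv_smul₀ (hcne n)]
    rw [hL4] at L3
    have L5 := L3.trans_isBigO (hv.isBigO_one (F := ℝ))
    have L6 : Tendsto (fun n : ℕ =>
        ((n : ℝ) + 1) • (f (y + ((n : ℝ) + 1)⁻¹ • (ξ + a n)) - f y
          - fderiv ℝ f y (((n : ℝ) + 1)⁻¹ • (ξ + a n)))) atTop (𝓝 0) :=
      (isLittleO_one_iff ℝ).1 L5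
    have hfa : Tendsto (fun n : ℕ => fderiv ℝ f y (a n)) atTop (𝓝 0) := by
      have h := ((fderiv ℝ f y).continuous.tendsto 0).comp ha
      simpa [Function.comp_def] using h
    have hsum := L6.add hfa
    rw [add_zero] at hsum
    refine hsum.congr fun n => ?_
    have h1 : ((n : ℝ) + 1) • fderiv ℝ f y (((n : ℝ) + 1)⁻¹ • (ξ + a n))
        = fderiv ℝ f y ξ + fderiv ℝ f y (a n) := by
      rw [← map_smul, smul_inv_smul₀ (hcne n), map_add]
    rw [smul_sub, h1]
    abel
  -- the perturbation field on (Y × Y) × C₀(ℕ, Y)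
  let S : ((Y × Y) × ZeroAtInftyContinuousMap ℕ Y) → ZeroAtInftyContinuousMap ℕ Y := fun q =>
    { toFun := fun n => ((n : ℝ) + 1) •
        (f (q.1.1 + ((n : ℝ) + 1)⁻¹ • (q.1.2 + q.2 n)) - f q.1.1) - fderiv ℝ f q.1.1 q.1.2
      continuous_toFun := continuous_of_discreteTopology
      zero_at_infty' := by rw [cocompact_eq_atTop (α := ℕ)]; exact key q.1.1 q.1.2 q.2 }
  let F : ((Y × Y) × ZeroAtInftyContinuousMap ℕ Y) → ((Y × Y) × ZeroAtInftyContinuousMap ℕ Y) :=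
    fun q => ((f q.1.1, fderiv ℝ f q.1.1 q.1.2), S q)
  -- evaluation maps
  let ev : ℕ → (ZeroAtInftyContinuousMap ℕ Y →L[ℝ] Y) := fun n =>
    LinearMap.mkContinuous
      { toFun := fun a => a n
        map_add' := fun a b => rfl
        map_smul' := fun r a => rfl } 1
      (fun a => by
        rw [one_mul, ← ZeroAtInftyContinuousMap.norm_toBCF_eq_norm]
        exact BoundedContinuousFunction.norm_coe_le_norm a.toBCF n)
  set R := Φ.map ((Y × Y) × ZeroAtInftyContinuousMap ℕ Y) F ((y₀, ξ₀), 0) with hR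
  -- first projection relation
  have hfst : R.1 = Φ.map (Y × Y) (fun p => (f p.1, fderiv ℝ f p.1 p.2)) (y₀, ξ₀) := by
    have h := hae ((Y × Y) × ZeroAtInftyContinuousMap ℕ Y) (Y × Y)
        (ContinuousLinearMap.fst ℝ (Y × Y) (ZeroAtInftyContinuousMap ℕ Y)) 0 F
        (fun p => (f p.1, fderiv ℝ f p.1 p.2))
        (fun q => by simp [F]) ((y₀, ξ₀), 0)
    simpa using h
  -- per-n evaluation relation
  have hq2 : ∀ n : ℕ, R.1.2 + R.2 n
      = ((n : ℝ) + 1) • (Φ.map Y f (y₀ + ((n : ℝ) + 1)⁻¹ • ξ₀) - Φ.map Y f y₀) := by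
    intro n
    set Qn : ((Y × Y) × ZeroAtInftyContinuousMap ℕ Y) →L[ℝ] Y × Y :=
      ((ContinuousLinearMap.fst ℝ Y Y).comp
          (ContinuousLinearMap.fst ℝ (Y × Y) (ZeroAtInftyContinuousMap ℕ Y))).prod
        (((ContinuousLinearMap.snd ℝ Y Y).comp
            (ContinuousLinearMap.fst ℝ (Y × Y) (ZeroAtInftyContinuousMap ℕ Y)))
          + ((ev n).comp (ContinuousLinearMap.snd ℝ (Y × Y) (ZeroAtInftyContinuousMap ℕ Y))))
      with hQn
    have hQnapp : ∀ q : (Y × Y) × ZeroAtInftyContinuousMap ℕ Y,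
        Qn q = (q.1.1, q.1.2 + q.2 n) := by
      intro q
      simp [hQn, ev, LinearMap.mkContinuous_apply]
    have hcond : ∀ q : (Y × Y) × ZeroAtInftyContinuousMap ℕ Y,
        Qn (F q) = (fun p : Y × Y =>
          (f p.1, ((n : ℝ) + 1) • (f (p.1 + ((n : ℝ) + 1)⁻¹ • p.2) - f p.1))) (Qn q + 0) := by
      intro q
      rw [add_zero, hQnapp, hQnapp]
      show ((f q.1.1, fderiv ℝ f q.1.1 q.1.2 + S q n) : Y × Y) = _
      dsimp only
      have : fderiv ℝ f q.1.1 q.1.2 + S q n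
          = ((n : ℝ) + 1) • (f (q.1.1 + ((n : ℝ) + 1)⁻¹ • (q.1.2 + q.2 n)) - f q.1.1) := by
        show fderiv ℝ f q.1.1 q.1.2 + (((n : ℝ) + 1) •
          (f (q.1.1 + ((n : ℝ) + 1)⁻¹ • (q.1.2 + q.2 n)) - f q.1.1)
            - fderiv ℝ f q.1.1 q.1.2) = _
        abel
      rw [this]
    have h := hae ((Y × Y) × ZeroAtInftyContinuousMap ℕ Y) (Y × Y) Qn 0 F
        (fun p : Y × Y =>
          (f p.1, ((n : ℝ) + 1) • (f (p.1 + ((n : ℝ) + 1)⁻¹ • p.2) - f p.1)))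
        hcond ((y₀, ξ₀), 0)
    rw [add_zero, add_zero, hQnapp, hQnapp, ← hR] at h
    have hzero : ((0 : ZeroAtInftyContinuousMap ℕ Y)) n = 0 := rfl
    rw [hzero, add_zero] at h
    rw [integrator_quot Φ hae f ((n : ℝ) + 1) (hcne n) y₀ ξ₀] at h
    exact congrArg Prod.snd h
  -- limits
  have hRtend : Tendsto (fun n : ℕ => R.2 n) atTop (𝓝 0) := by
    have h := zero_at_infty (f := R.2)
    rwa [cocompact_eq_atTop (α := ℕ)] at h
  have ht1 : Tendsto (fun n : ℕ => R.1.2 + R.2 n) atTop (𝓝 (R.1.2)) := by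
    simpa using tendsto_const_nhds.add hRtend
  have hcnorm : Tendsto (fun n : ℕ => ‖(n : ℝ) + 1‖) atTop atTop := by
    have h1 : Tendsto (fun n : ℕ => ((n : ℝ) + 1)) atTop atTop :=
      tendsto_atTop_add_const_right _ 1 tendsto_natCast_atTop_atTop
    exact h1.congr fun n => (Real.norm_of_nonneg (by positivity)).symm
  have ht2 := (hΦdiff y₀).hasFDerivAt.lim ξ₀ hcnorm
  have hR12 : R.1.2 = fderiv ℝ (Φ.map Y f) y₀ ξ₀ :=
    tendsto_nhds_unique (ht1.congr hq2) ht2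
  rw [← hfst]
  refine Prod.ext ?_ hR12
  -- R.1.1 = Φ.map Y f y₀ from hq2's parent relation: reuse the n = 0 projection
  have h := hae ((Y × Y) × ZeroAtInftyContinuousMap ℕ Y) Y
      ((ContinuousLinearMap.fst ℝ Y Y).comp
        (ContinuousLinearMap.fst ℝ (Y × Y) (ZeroAtInftyContinuousMap ℕ Y))) 0 F f
      (fun q => by simp [F]) ((y₀, ξ₀), 0)
  simpa using h

/-- if `(Y, ω)` is a symplectic vector space and `f` a symplectic
vector field (`ω(f'(y)ξ, η) + ω(ξ, f'(y)η) = 0`), then any affine equivariant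
integrator preserving quadratic invariants is a symplectic integrator:
`ω(Φ_f'(y₀)ξ₀, Φ_f'(y₀)η₀) = ω(ξ₀, η₀)`. -/
theorem symplectic_integrator
    (Φ : Integrator) (hae : AffineEquivariant Φ)
    (hquad : PreservesQuadraticInvariants Φ)
    {Y : Type} [NormedAddCommGroup Y] [NormedSpace ℝ Y]
    (ω : Y →L[ℝ] Y →L[ℝ] ℝ)
    (hanti : ∀ ξ η, ω ξ η = - ω η ξ)
    (hnondeg : ∀ ξ, (∀ η, ω ξ η = 0) → ξ = 0)
    (f : Y → Y) (hf : Differentiable ℝ f)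
    (hsymp : ∀ y ξ η, ω (fderiv ℝ f y ξ) η + ω ξ (fderiv ℝ f y η) = 0)
    (hΦdiff : Differentiable ℝ (Φ.map Y f)) :
    ∀ y₀ ξ₀ η₀ : Y,
      ω (fderiv ℝ (Φ.map Y f) y₀ ξ₀) (fderiv ℝ (Φ.map Y f) y₀ η₀) = ω ξ₀ η₀ := by
  intro y₀ ξ₀ η₀
  -- the doubled variational field on (Y × Y) × Y
  set G3 : (Y × Y) × Y → (Y × Y) × Y :=
    fun q => ((f q.1.1, fderiv ℝ f q.1.1 q.1.2), fderiv ℝ f q.1.1 q.2) with hG3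
  set R := Φ.map ((Y × Y) × Y) G3 ((y₀, ξ₀), η₀) with hRdef
  -- projections onto the two variational copies
  have h1 : R.1 = (Φ.map Y f y₀, fderiv ℝ (Φ.map Y f) y₀ ξ₀) := by
    have h := hae ((Y × Y) × Y) (Y × Y) (ContinuousLinearMap.fst ℝ (Y × Y) Y) 0 G3
        (fun p : Y × Y => (f p.1, fderiv ℝ f p.1 p.2))
        (fun q => by simp [hG3]) ((y₀, ξ₀), η₀)
    simp only [ContinuousLinearMap.coe_fst', add_zero] at h
    rw [← hRdef] at h
    rw [h, integrator_variational Φ hae f hf hΦdiff y₀ ξ₀]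
  have h2 : ((R.1.1, R.2) : Y × Y) = (Φ.map Y f y₀, fderiv ℝ (Φ.map Y f) y₀ η₀) := by
    set Pb : ((Y × Y) × Y) →L[ℝ] Y × Y :=
      ((ContinuousLinearMap.fst ℝ Y Y).comp (ContinuousLinearMap.fst ℝ (Y × Y) Y)).prod
        (ContinuousLinearMap.snd ℝ (Y × Y) Y) with hPb
    have hPbapp : ∀ q : (Y × Y) × Y, Pb q = (q.1.1, q.2) := fun q => by simp [hPb]
    have h := hae ((Y × Y) × Y) (Y × Y) Pb 0 G3
        (fun p : Y × Y => (f p.1, fderiv ℝ f p.1 p.2))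
        (fun q => by rw [add_zero, hPbapp, hPbapp]) ((y₀, ξ₀), η₀)
    rw [add_zero, add_zero, hPbapp, hPbapp, ← hRdef] at h
    dsimp only at h
    rw [h, integrator_variational Φ hae f hf hΦdiff y₀ η₀]
  -- the quadratic invariant
  set B : ((Y × Y) × Y) →L[ℝ] ((Y × Y) × Y) →L[ℝ] ℝ :=
    ((ContinuousLinearMap.compL ℝ ((Y × Y) × Y) Y ℝ).flip
        (ContinuousLinearMap.snd ℝ (Y × Y) Y)).comp
      (ω.comp ((ContinuousLinearMap.snd ℝ Y Y).comp (ContinuousLinearMap.fst ℝ (Y × Y) Y)))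
    with hB
  have hBapp : ∀ q q' : (Y × Y) × Y, B q q' = ω q.1.2 q'.2 := fun q q' => rfl
  have hinv : ∀ q : (Y × Y) × Y,
      B (G3 q) q + B q (G3 q) + (0 : ((Y × Y) × Y) →L[ℝ] ℝ) (G3 q) = 0 := by
    intro q
    rw [hBapp, hBapp]
    simp only [hG3, ContinuousLinearMap.zero_apply, add_zero]
    exact hsymp q.1.1 q.1.2 q.2
  have hq := hquad ((Y × Y) × Y) B (0 : ((Y × Y) × Y) →L[ℝ] ℝ) 0 G3 hinv ((y₀, ξ₀), η₀)
  rw [← hRdef] at hq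
  simp only [ContinuousLinearMap.zero_apply, add_zero] at hq
  rw [hBapp, hBapp] at hq
  have hξ : R.1.2 = fderiv ℝ (Φ.map Y f) y₀ ξ₀ := congrArg Prod.snd h1
  have hη : R.2 = fderiv ℝ (Φ.map Y f) y₀ η₀ := congrArg Prod.snd h2
  rw [hξ, hη] at hq
  exact hq
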